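/- Let G be a core input-output network with distinct input and output nodes, and let ρ be a simple node that is not super-simple. Then there exist adjacent super-simple nodes ρ_1 and ρ_2 (adjacent in the downstream ordering of super-simple nodes) such that ρ lies between ρ_1 and ρ_2, i.e., some ιo-simple path visits ρ_1, then ρ, then ρ_2 in that order, with no other super-simple node between ρ_1 and ρ_2 on that path. -/

import Mathlib

/-- A directed simple path from `a` to `b`. -/
def IsSimplePath {V : Type*} (Adj : V → V → Prop) (a b : V) (l : List V) : Prop :=
  l.Chain' Adj ∧ l.head? = some a ∧ l.getLast? = some b ∧ l.Nodup

/-- A node lying on every `ιo`-simple path. -/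
def IsSuperSimple {V : Type*} (Adj : V → V → Prop) (ι o : V) (v : V) : Prop :=
  ∀ l : List V, IsSimplePath Adj ι o l → v ∈ l

section Aux

variable {V : Type*} [DecidableEq V] {Adj : V → V → Prop}

/-- Any chain-walk gives reflexive-transitive reachability for the relation
restricted to the walk's vertices. -/
lemma walk_to_rtg : ∀ (l : List V) (a b : V), l.Chain' Adj →
    l.head? = some a → l.getLast? = some b →
    Relation.ReflTransGen (fun x y => Adj x y ∧ x ∈ l ∧ y ∈ l) a b := by
  intro l
  induction l with
  | nil => intro a b _ ha _; simp at ha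
  | cons c t ih =>
    intro a b hc ha hb
    have hca : c = a := by simpa using ha
    subst hca
    cases t with
    | nil =>
      have : c = b := by simpa using hb
      subst this
      exact Relation.ReflTransGen.refl
    | cons d t' =>
      have hadj : Adj c d := (List.isChain_cons_cons.mp hc).1
      have h2 := ih d b (List.isChain_cons_cons.mp hc).2 rfl
        (by simpa [List.getLast?_cons_cons] using hb)
      have h2' : Relation.ReflTransGen
          (fun x y => Adj x y ∧ x ∈ c :: d :: t' ∧ y ∈ c :: d :: t') d b :=
        Relation.ReflTransGen.mono (r := fun x y => Adj x y ∧ x ∈ d :: t' ∧ y ∈ d :: t')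
          (p := fun x y => Adj x y ∧ x ∈ c :: d :: t' ∧ y ∈ c :: d :: t')
          (fun x y hxy => ⟨hxy.1, List.mem_cons_of_mem _ hxy.2.1,
            List.mem_cons_of_mem _ hxy.2.2⟩) d b h2
      exact Relation.ReflTransGen.head ⟨hadj, by simp, by simp⟩ h2'

/-- Reachability yields a simple path. -/
lemma rtg_to_simplePath {R : V → V → Prop} {a b : V}
    (h : Relation.ReflTransGen R a b) : ∃ l, IsSimplePath R a b l := by
  induction h with
  | refl => exact ⟨[a], by simp [IsSimplePath]; exact List.isChain_singleton a⟩
  | @tail b c hab hbc ih =>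
    obtain ⟨l, hchain, hhead, hlast, hnd⟩ := ih
    have hlne : l ≠ [] := by rintro rfl; simp at hhead
    by_cases hcl : c ∈ l
    · have hlt : l.idxOf c < l.length := List.idxOf_lt_length_iff.mpr hcl
      refine ⟨l.take (l.idxOf c + 1), hchain.take _, ?_, ?_,
        hnd.sublist (List.take_sublist _ _)⟩
      · rw [← hhead]
        cases l with
        | nil => simp at hhead
        | cons x t => simp
      · have hlen : (l.take (l.idxOf c + 1)).length = l.idxOf c + 1 := by
          rw [List.length_take]; omega
        rw [List.getLast?_eq_getElem?, hlen]
        simp only [Nat.add_sub_cancel]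
        rw [List.getElem?_take_of_lt (by omega)]
        rw [List.getElem?_eq_getElem hlt, List.getElem_idxOf hlt]
    · refine ⟨l ++ [c], ?_, ?_, ?_, ?_⟩
      · refine List.IsChain.append hchain (List.isChain_singleton c) ?_
        intro x hx y hy
        have hyc : c = y := by simpa using hy
        subst hyc
        rw [hlast] at hx
        have hxb : b = x := by simpa using hx
        subst hxb
        exact hbc
      · rw [List.head?_append_of_ne_nil _ hlne]
        exact hhead
      · simp
      · simp [List.nodup_append, hnd, hcl]
        rintro x hx rfl; exact hcl hx

/-- In a chain walk, every element is the head or a target of an edge. -/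
lemma chain'_mem_cases {R : V → V → Prop} : ∀ {l : List V} {a x : V}, l.Chain' R →
    l.head? = some a → x ∈ l → x = a ∨ ∃ y, R y x := by
  intro l
  induction l with
  | nil => intro a x _ ha _; simp at ha
  | cons c t ih =>
    intro a x hc ha hx
    have hca : c = a := by simpa using ha
    subst hca
    rcases List.mem_cons.mp hx with rfl | hx'
    · exact Or.inl rfl
    · cases t with
      | nil => simp at hx'
      | cons d t' =>
        rcases ih (List.isChain_cons_cons.mp hc).2 rfl hx' with rfl | h
        · exact Or.inr ⟨c, (List.isChain_cons_cons.mp hc).1⟩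
        · exact Or.inr h

/-- Super-simple nodes occur in the same order on every simple path. -/
lemma ss_order {ι o u v : V} (hu : IsSuperSimple Adj ι o u) (hv : IsSuperSimple Adj ι o v)
    (huv : u ≠ v) {P Q : List V} (hP : IsSimplePath Adj ι o P) (hQ : IsSimplePath Adj ι o Q)
    (h : P.idxOf u < P.idxOf v) : Q.idxOf u < Q.idxOf v := by
  obtain ⟨hPc, hPh, hPl, hPn⟩ := hP
  obtain ⟨hQc, hQh, hQl, hQn⟩ := hQ
  have huQ : u ∈ Q := hu Q ⟨hQc, hQh, hQl, hQn⟩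
  have hvQ : v ∈ Q := hv Q ⟨hQc, hQh, hQl, hQn⟩
  have hvP : v ∈ P := hv P ⟨hPc, hPh, hPl, hPn⟩
  have huP : u ∈ P := hu P ⟨hPc, hPh, hPl, hPn⟩
  set iP := P.idxOf u with hiP
  set jP := P.idxOf v with hjP
  set iQ := Q.idxOf u with hiQ
  set jQ := Q.idxOf v with hjQ
  have hiPl : iP < P.length := List.idxOf_lt_length_iff.mpr huP
  have hjPl : jP < P.length := List.idxOf_lt_length_iff.mpr hvP
  have hiQl : iQ < Q.length := List.idxOf_lt_length_iff.mpr huQ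
  have hjQl : jQ < Q.length := List.idxOf_lt_length_iff.mpr hvQ
  by_contra hcon
  have hne : iQ ≠ jQ := fun he => huv ((List.idxOf_inj huQ).mp he)
  have hQord : jQ < iQ := by omega
  set W : List V := P.take (iP + 1) ++ Q.drop (iQ + 1) with hW
  have hPu : P[iP] = u := List.getElem_idxOf hiPl
  have hQu : Q[iQ] = u := List.getElem_idxOf hiQl
  have hPv : P[jP] = v := List.getElem_idxOf hjPl
  have hQv : Q[jQ] = v := List.getElem_idxOf hjQl
  have hAlen : (P.take (iP + 1)).length = iP + 1 := by rw [List.length_take]; omega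
  have hAlast : (P.take (iP + 1)).getLast? = some u := by
    rw [List.getLast?_eq_getElem?, hAlen]
    simp only [Nat.add_sub_cancel]
    rw [List.getElem?_take_of_lt (by omega), List.getElem?_eq_getElem hiPl, hPu]
  have hAne : P.take (iP + 1) ≠ [] := by
    apply List.length_pos_iff.mp
    rw [hAlen]; omega
  -- the walk is a chain
  have hWc : W.Chain' Adj := by
    refine List.IsChain.append (hPc.take _) (hQc.drop _) ?_
    intro x hx y hy
    rw [hAlast] at hx
    have hxu : u = x := by simpa using hx
    subst hxu
    rw [List.head?_drop] at hy
    have hyQ : Q[iQ + 1]? = some y := hy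
    have hlt : iQ + 1 < Q.length := by
      by_contra hge
      rw [List.getElem?_eq_none (by omega)] at hyQ
      simp at hyQ
    have hyv : Q[iQ + 1] = y := by
      rw [List.getElem?_eq_getElem hlt] at hyQ
      exact Option.some.inj hyQ
    have := List.isChain_iff_getElem.mp hQc iQ (by omega)
    simpa [List.get_eq_getElem, hQu, hyv] using this
  -- head of the walk
  have hWh : W.head? = some ι := by
    rw [hW, List.head?_append_of_ne_nil _ hAne]
    rw [← hPh]
    cases P with
    | nil => simp at hPh
    | cons x t => simp
  -- last of the walk
  have hWl : W.getLast? = some o := by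
    by_cases hB : iQ + 1 < Q.length
    · have hBne : Q.drop (iQ + 1) ≠ [] := by
        apply List.length_pos_iff.mp
        rw [List.length_drop]; omega
      rw [hW, List.getLast?_append_of_ne_nil _ hBne]
      rw [List.getLast?_eq_getElem?, List.length_drop]
      rw [List.getElem?_drop]
      have : iQ + 1 + (Q.length - (iQ + 1) - 1) = Q.length - 1 := by omega
      rw [this, ← List.getLast?_eq_getElem?]
      exact hQl
    · have hBnil : Q.drop (iQ + 1) = [] := List.drop_eq_nil_of_le (by omega)
      have huo : u = o := by
        have h1 : Q[Q.length - 1]? = some o := by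
          rw [← List.getLast?_eq_getElem?]; exact hQl
        have hiq : Q.length - 1 = iQ := by omega
        rw [hiq] at h1
        have h2 : Q[iQ]? = some u := List.getElem?_idxOf huQ
        exact Option.some.inj (h2.symm.trans h1)
      rw [hW, hBnil, List.append_nil, hAlast, huo]
  -- v is not on the walk
  have hvW : v ∉ W := by
    intro hvW
    rw [hW, List.mem_append] at hvW
    rcases hvW with hvA | hvB
    · obtain ⟨k, hk, hkeq⟩ := List.mem_iff_getElem.mp hvA
      rw [List.getElem_take] at hkeq
      have hkP : k < P.length := by
        rw [hAlen] at hk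
        omega
      have : k = jP := by
        rw [← hPv] at hkeq
        exact (hPn.getElem_inj_iff).mp hkeq
      rw [hAlen] at hk
      omega
    · obtain ⟨k, hk, hkeq⟩ := List.mem_iff_getElem.mp hvB
      rw [List.getElem_drop] at hkeq
      have : iQ + 1 + k = jQ := by
        rw [← hQv] at hkeq
        exact (hQn.getElem_inj_iff).mp hkeq
      omega
  -- extract a simple path from the walk; it avoids v, contradiction
  have hrtg := walk_to_rtg W ι o hWc hWh hWl
  obtain ⟨p, hpc, hph, hpl, hpn⟩ := rtg_to_simplePath hrtg
  have hpsub : ∀ x ∈ p, x ∈ W := by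
    intro x hx
    rcases chain'_mem_cases hpc hph hx with rfl | ⟨y, hy⟩
    · exact List.mem_of_mem_head? (hWh ▸ rfl : x ∈ W.head?)
    · exact hy.2.2
  have hvp : v ∈ p := hv p ⟨hpc.imp (fun _ _ h => h.1), hph, hpl, hpn⟩
  exact hvW (hpsub v hvp)

end Aux

theorem stmt6 {V : Type*} [Fintype V] [DecidableEq V] (Adj : V → V → Prop)
    (ι o ρ : V) (hio : ι ≠ o)
    (hcore : ∀ v : V, Relation.ReflTransGen Adj ι v ∧ Relation.ReflTransGen Adj v o)
    (hsimple : ∃ l : List V, IsSimplePath Adj ι o l ∧ ρ ∈ l)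
    (hnotss : ¬ IsSuperSimple Adj ι o ρ) :
    ∃ ρ₁ ρ₂ : V,
      IsSuperSimple Adj ι o ρ₁ ∧ IsSuperSimple Adj ι o ρ₂ ∧ ρ₁ ≠ ρ₂ ∧
      (∀ l : List V, IsSimplePath Adj ι o l → l.idxOf ρ₁ < l.idxOf ρ₂) ∧
      (¬ ∃ σ : V, IsSuperSimple Adj ι o σ ∧ σ ≠ ρ₁ ∧ σ ≠ ρ₂ ∧
        ∃ l : List V, IsSimplePath Adj ι o l ∧
          l.idxOf ρ₁ < l.idxOf σ ∧ l.idxOf σ < l.idxOf ρ₂) ∧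
      ∃ l : List V, IsSimplePath Adj ι o l ∧
        l.idxOf ρ₁ < l.idxOf ρ ∧ l.idxOf ρ < l.idxOf ρ₂ := by
  classical
  obtain ⟨P, hP, hρP⟩ := hsimple
  obtain ⟨hPc, hPh, hPl, hPn⟩ := hP
  have hPfull : IsSimplePath Adj ι o P := ⟨hPc, hPh, hPl, hPn⟩
  have hPne : P ≠ [] := by rintro rfl; simp at hPh
  have hn : 0 < P.length := List.length_pos_iff.mpr hPne
  set n := P.length with hnn
  -- ι and o are super-simple
  have hιss : IsSuperSimple Adj ι o ι := fun l hl =>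
    List.mem_of_mem_head? (hl.2.1 ▸ rfl : ι ∈ l.head?)
  have hoss : IsSuperSimple Adj ι o o := fun l hl =>
    List.mem_of_mem_getLast? (hl.2.2.1 ▸ rfl : o ∈ l.getLast?)
  set iρ := P.idxOf ρ with hiρdef
  have hiρ : iρ < n := List.idxOf_lt_length_iff.mpr hρP
  have hρget : P[iρ] = ρ := List.getElem_idxOf hiρ
  have h0 : P[0]'hn = ι := by
    cases P with
    | nil => simp at hPh
    | cons x t => simpa using hPh
  have hlastP : P[n - 1]'(by omega) = o := by
    have h1 : P.getLast? = P[P.length - 1]? := List.getLast?_eq_getElem?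
    rw [hPl, List.getElem?_eq_getElem (by omega)] at h1
    exact (Option.some.inj h1).symm
  have hρι : ρ ≠ ι := fun h => hnotss (h ▸ hιss)
  have hρo : ρ ≠ o := fun h => hnotss (h ▸ hoss)
  have h0lt : 0 < iρ := by
    rcases Nat.eq_zero_or_pos iρ with h | h
    · exact absurd (by rw [← hρget]; simp only [h]; exact h0) hρι
    · exact h
  have hltn : iρ < n - 1 := by
    rcases lt_or_eq_of_le (by omega : iρ ≤ n - 1) with h | h
    · exact h
    · exact absurd (by rw [← hρget]; simp only [h]; exact hlastP) hρo
  -- the set of super-simple indices before ρ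
  set T : Finset ℕ := (Finset.range iρ).filter
    (fun i => IsSuperSimple Adj ι o (P.getD i ι)) with hTdef
  have hT0 : 0 ∈ T := by
    rw [hTdef, Finset.mem_filter, Finset.mem_range]
    exact ⟨h0lt, by rw [List.getD_eq_getElem _ _ hn, h0]; exact hιss⟩
  set i₁ := T.max' ⟨0, hT0⟩ with hi₁def
  have hi₁T : i₁ ∈ T := T.max'_mem ⟨0, hT0⟩
  have hi₁lt : i₁ < iρ := by
    have := (Finset.mem_filter.mp hi₁T).1
    exact Finset.mem_range.mp this
  have hi₁n : i₁ < n := by omega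
  set ρ₁ := P[i₁]'hi₁n with hρ₁def
  have hρ₁ss : IsSuperSimple Adj ι o ρ₁ := by
    have := (Finset.mem_filter.mp hi₁T).2
    rwa [List.getD_eq_getElem _ _ hi₁n] at this
  -- the set of super-simple indices after ρ
  set U : Finset ℕ := (Finset.Ico (iρ + 1) n).filter
    (fun i => IsSuperSimple Adj ι o (P.getD i ι)) with hUdef
  have hUn : n - 1 ∈ U := by
    rw [hUdef, Finset.mem_filter, Finset.mem_Ico]
    refine ⟨⟨by omega, by omega⟩, ?_⟩
    rw [List.getD_eq_getElem _ _ (by omega : n - 1 < P.length), hlastP]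
    exact hoss
  set i₂ := U.min' ⟨_, hUn⟩ with hi₂def
  have hi₂U : i₂ ∈ U := U.min'_mem ⟨_, hUn⟩
  have hi₂gt : iρ < i₂ ∧ i₂ < n := by
    have := (Finset.mem_filter.mp hi₂U).1
    have := Finset.mem_Ico.mp this
    omega
  set ρ₂ := P[i₂]'hi₂gt.2 with hρ₂def
  have hρ₂ss : IsSuperSimple Adj ι o ρ₂ := by
    have := (Finset.mem_filter.mp hi₂U).2
    rwa [List.getD_eq_getElem _ _ hi₂gt.2] at this
  -- index computations
  have hidx1 : P.idxOf ρ₁ = i₁ := hPn.idxOf_getElem i₁ hi₁n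
  have hidx2 : P.idxOf ρ₂ = i₂ := hPn.idxOf_getElem i₂ hi₂gt.2
  have hρ₁ρ₂ : ρ₁ ≠ ρ₂ := by
    intro h
    have : i₁ = i₂ := hPn.getElem_inj_iff.mp h
    omega
  refine ⟨ρ₁, ρ₂, hρ₁ss, hρ₂ss, hρ₁ρ₂, ?_, ?_, P, hPfull, ?_⟩
  · intro L hL
    exact ss_order hρ₁ss hρ₂ss hρ₁ρ₂ hPfull hL (by rw [hidx1, hidx2]; omega)
  · rintro ⟨σ, hσss, hσ1, hσ2, L, hL, h1, h2⟩
    have hσP : σ ∈ P := hσss P hPfull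
    have hσn : P.idxOf σ < n := List.idxOf_lt_length_iff.mpr hσP
    set iσ := P.idxOf σ with hiσdef
    have hσget : P[iσ] = σ := List.getElem_idxOf hσn
    have hp1 : i₁ < iσ := by
      have := ss_order hρ₁ss hσss (fun h => hσ1 h.symm) hL hPfull h1
      rwa [hidx1] at this
    have hp2 : iσ < i₂ := by
      have := ss_order hσss hρ₂ss hσ2 hL hPfull h2
      rwa [hidx2] at this
    rcases lt_trichotomy iσ iρ with h | h | h
    · have hmem : iσ ∈ T := by
        rw [hTdef, Finset.mem_filter, Finset.mem_range]
        exact ⟨h, by rw [List.getD_eq_getElem _ _ hσn, hσget]; exact hσss⟩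
      have := Finset.le_max' T iσ hmem
      omega
    · apply hnotss
      have hσ? : P[iσ]? = some σ := List.getElem?_idxOf hσP
      rw [h] at hσ?
      have hρ? : P[iρ]? = some ρ := List.getElem?_idxOf hρP
      have : σ = ρ := Option.some.inj (hσ?.symm.trans hρ?)
      exact this ▸ hσss
    · have hmem : iσ ∈ U := by
        rw [hUdef, Finset.mem_filter, Finset.mem_Ico]
        exact ⟨⟨by omega, hσn⟩, by rw [List.getD_eq_getElem _ _ hσn, hσget]; exact hσss⟩
      have := Finset.min'_le U iσ hmem
      omega
  · rw [hidx1, hidx2, ← hiρdef]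
    omega
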